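/- Let n ≥ 4. In the singular Hecke algebra H(SB_n), set ω_0 = σ_1σ_2 + σ_3σ_2 + σ_1σ_3 − (q−1)σ_1 − (q−1)σ_2 − (q−1)σ_3 + (q²−q+1) and C_{13} = 2σ_1σ_3 − (q−1)σ_1 − (q−1)σ_3 + q² + 1. Then C_{13} = q^{−2} (qσ_1ω_0 + qω_0σ_3 + (q−1)σ_1ω_0σ_3 − σ_1ω_0σ_3σ_2)(σ_1 − (q−1)). -/

import Mathlib

noncomputable section
open scoped Classical

/-- `𝕂 = ℂ(q)`. -/
abbrev K : Type := RatFunc ℂ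
/-- `𝕂(z)`. -/
abbrev Kz : Type := RatFunc K
/-- the variable `q`. -/
def q : K := RatFunc.X
/-- the variable `z`. -/
def z : Kz := RatFunc.X

/-- Generators of the singular braid monoid on `n` strands:
`s i` is `σ_{i+1}`, `si i` is `σ_{i+1}⁻¹`, `t i` is `τ_{i+1}` (0-indexed `i`). -/
inductive SBGen (n : ℕ) : Type
  | s (i : Fin (n - 1))
  | si (i : Fin (n - 1))
  | t (i : Fin (n - 1))

/-- `|i - j| = 1`. -/
def adj {n : ℕ} (i j : Fin (n - 1)) : Prop := (i : ℕ) + 1 = (j : ℕ) ∨ (j : ℕ) + 1 = (i : ℕ)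
/-- `|i - j| ≥ 2`. -/
def far {n : ℕ} (i j : Fin (n - 1)) : Prop := (i : ℕ) + 2 ≤ (j : ℕ) ∨ (j : ℕ) + 2 ≤ (i : ℕ)

open FreeMonoid in
/-- The defining relations of the singular braid monoid. -/
inductive SBRel (n : ℕ) : FreeMonoid (SBGen n) → FreeMonoid (SBGen n) → Prop
  | inv_right (i) : SBRel n (of (.s i) * of (.si i)) 1
  | inv_left (i) : SBRel n (of (.si i) * of (.s i)) 1
  | sigma_tau (i) : SBRel n (of (.s i) * of (.t i)) (of (.t i) * of (.s i))
  | braid (i j) : adj i j →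
      SBRel n (of (.s i) * of (.s j) * of (.s i)) (of (.s j) * of (.s i) * of (.s j))
  | braid_tau (i j) : adj i j →
      SBRel n (of (.s i) * of (.s j) * of (.t i)) (of (.t j) * of (.s i) * of (.s j))
  | ss_comm (i j) : far i j → SBRel n (of (.s i) * of (.s j)) (of (.s j) * of (.s i))
  | st_comm (i j) : far i j → SBRel n (of (.s i) * of (.t j)) (of (.t j) * of (.s i))
  | tt_comm (i j) : far i j → SBRel n (of (.t i) * of (.t j)) (of (.t j) * of (.t i))

/-- The congruence generated by the singular braid relations. -/
def SBcon (n : ℕ) : Con (FreeMonoid (SBGen n)) := conGen (SBRel n)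

/-- The singular braid monoid `SB_n`. -/
def SB (n : ℕ) : Type := (SBcon n).Quotient

instance (n : ℕ) : Monoid (SB n) := Con.monoid _

/-- The generator `σ_{i+1}` of `SB_n`. -/
def sσ {n : ℕ} (i : Fin (n - 1)) : SB n := (SBcon n).mk' (FreeMonoid.of (.s i))
/-- The generator `σ_{i+1}⁻¹` of `SB_n`. -/
def sσi {n : ℕ} (i : Fin (n - 1)) : SB n := (SBcon n).mk' (FreeMonoid.of (.si i))
/-- The generator `τ_{i+1}` of `SB_n`. -/
def sτ {n : ℕ} (i : Fin (n - 1)) : SB n := (SBcon n).mk' (FreeMonoid.of (.t i))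

/-- Number of singular points of a generator. -/
def genDeg {n : ℕ} : SBGen n → Multiplicative ℕ
  | .t _ => Multiplicative.ofAdd 1
  | _ => 1

/-- Number of singular points of a word. -/
def degF (n : ℕ) : FreeMonoid (SBGen n) →* Multiplicative ℕ := FreeMonoid.lift genDeg

lemma degF_rel {n : ℕ} : SBcon n ≤ Con.ker (degF n) := by
  refine Con.conGen_le.mpr ?_
  rintro x y h
  rw [Con.ker_rel]
  cases h <;>
    simp [degF, genDeg, mul_comm]

/-- The number of singular points, as a monoid homomorphism. -/
def deg {n : ℕ} : SB n →* Multiplicative ℕ := Con.lift _ (degF n) degF_rel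

/-- The number of singular points of a singular braid. -/
def ndeg {n : ℕ} (β : SB n) : ℕ := Multiplicative.toAdd (deg β)

/-- `S_d B_n` : the set of singular braids on `n` strands with `d` singular points. -/
def SdB (d n : ℕ) : Set (SB n) := {β | ndeg β = d}

lemma ndeg_mul {n : ℕ} (α β : SB n) : ndeg (α * β) = ndeg α + ndeg β := by
  simp [ndeg, map_mul]

lemma ndeg_one {n : ℕ} : ndeg (1 : SB n) = 0 := by simp [ndeg]

lemma ndeg_pow {n : ℕ} (β : SB n) (m : ℕ) : ndeg (β ^ m) = m * ndeg β := by
  induction m with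
  | zero => simp [ndeg_one]
  | succ m ih => rw [pow_succ, ndeg_mul, ih]; ring

lemma ndeg_sσ {n : ℕ} (i : Fin (n - 1)) : ndeg (sσ i) = 0 := rfl

lemma ndeg_sσi {n : ℕ} (i : Fin (n - 1)) : ndeg (sσi i) = 0 := by
  rfl

lemma ndeg_sτ {n : ℕ} (i : Fin (n - 1)) : ndeg (sτ i) = 1 := by
  rfl

lemma mem_SdB {n d : ℕ} {β : SB n} (h : ndeg β = d) : β ∈ SdB d n := h
/-- The monoid algebra `𝕂[SB_n]`. -/
abbrev MA (n : ℕ) : Type := MonoidAlgebra K (SB n)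

/-- The Hecke relations `σ_k² = (q-1)σ_k + q`. -/
def hrel (n : ℕ) : MA n → MA n → Prop := fun x y =>
  ∃ i : Fin (n - 1), x = (MonoidAlgebra.of K (SB n) (sσ i)) ^ 2 ∧
    y = (q - 1) • MonoidAlgebra.of K (SB n) (sσ i) + q • 1

/-- The singular Hecke algebra `H(SB_n)`. -/
def H (n : ℕ) : Type := RingQuot (hrel n)

instance (n : ℕ) : Ring (H n) := inferInstanceAs (Ring (RingQuot (hrel n)))
instance (n : ℕ) : Algebra K (H n) := inferInstanceAs (Algebra K (RingQuot (hrel n)))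

/-- The natural map `SB_n → H(SB_n)`. -/
def ιH {n : ℕ} (β : SB n) : H n := RingQuot.mkAlgHom K (hrel n) (MonoidAlgebra.of K (SB n) β)

/-- The image of `σ_{i+1}` in the singular Hecke algebra. -/
def σH {n : ℕ} (i : Fin (n - 1)) : H n := ιH (sσ i)
/-- The image of `τ_{i+1}` in the singular Hecke algebra. -/
def τH {n : ℕ} (i : Fin (n - 1)) : H n := ιH (sτ i)

/-- Scalars inside the singular Hecke algebra. -/
def cK {n : ℕ} (c : K) : H n := algebraMap K (H n) c

/-- `H(S_d B_n)` : the 𝕂-subspace of `H(SB_n)` spanned by the braids with `d` singular points. -/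
def HSd (d n : ℕ) : Submodule K (H n) := Submodule.span K (ιH '' SdB d n)

lemma ιH_mem {n d : ℕ} {β : SB n} (h : β ∈ SdB d n) : ιH β ∈ HSd d n :=
  Submodule.subset_span ⟨β, h, rfl⟩

/-- Map on generators realizing the inclusion `SB_n ↪ SB_{n+1}`. -/
def genMap {n : ℕ} : SBGen n → SBGen (n + 1)
  | .s i => .s (Fin.castLE (by omega) i)
  | .si i => .si (Fin.castLE (by omega) i)
  | .t i => .t (Fin.castLE (by omega) i)

lemma incl_wd {n : ℕ} :
    SBcon n ≤ Con.ker ((SBcon (n + 1)).mk'.comp (FreeMonoid.map genMap)) := by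
  refine Con.conGen_le.mpr ?_
  rintro x y h
  rw [Con.ker_rel]
  cases h with
  | inv_right i => exact (Con.eq _).mpr (ConGen.Rel.of _ _ (SBRel.inv_right _))
  | inv_left i => exact (Con.eq _).mpr (ConGen.Rel.of _ _ (SBRel.inv_left _))
  | sigma_tau i => exact (Con.eq _).mpr (ConGen.Rel.of _ _ (SBRel.sigma_tau _))
  | braid i j hij =>
      refine (Con.eq _).mpr (ConGen.Rel.of _ _ (SBRel.braid _ _ ?_))
      simpa [adj] using hij
  | braid_tau i j hij =>
      refine (Con.eq _).mpr (ConGen.Rel.of _ _ (SBRel.braid_tau _ _ ?_))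
      simpa [adj] using hij
  | ss_comm i j hij =>
      refine (Con.eq _).mpr (ConGen.Rel.of _ _ (SBRel.ss_comm _ _ ?_))
      simpa [far] using hij
  | st_comm i j hij =>
      refine (Con.eq _).mpr (ConGen.Rel.of _ _ (SBRel.st_comm _ _ ?_))
      simpa [far] using hij
  | tt_comm i j hij =>
      refine (Con.eq _).mpr (ConGen.Rel.of _ _ (SBRel.tt_comm _ _ ?_))
      simpa [far] using hij

/-- The natural monoid homomorphism `SB_n → SB_{n+1}`. -/
def incl {n : ℕ} : SB n →* SB (n + 1) :=
  Con.lift _ ((SBcon (n + 1)).mk'.comp (FreeMonoid.map genMap)) incl_wd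

lemma degF_genMap {n : ℕ} (w : FreeMonoid (SBGen n)) :
    degF (n + 1) (FreeMonoid.map genMap w) = degF n w := by
  change ((degF (n+1)).comp (FreeMonoid.map genMap)) w = degF n w
  refine DFunLike.congr_fun (FreeMonoid.hom_eq fun a => ?_) w
  cases a <;> rfl

lemma ndeg_incl {n : ℕ} (β : SB n) : ndeg (incl β) = ndeg β := by
  induction β using Con.induction_on with
  | H w =>
    show Multiplicative.toAdd (degF (n + 1) (FreeMonoid.map genMap w)) =
      Multiplicative.toAdd (degF n w)
    rw [degF_genMap]

/-- The generator `σ_n` of `SB_{n+2}` (0-indexed `n`), used in the Markov condition. -/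
def lastGen (n : ℕ) : Fin ((n + 2) - 1) := ⟨n, by omega⟩

/-- A collection of 𝕂-linear maps `H(S_d B_n) → 𝕂(z)`, `n ≥ 1`
(index `n` in the collection corresponds to `n+1` strands). -/
abbrev TRc (d : ℕ) : Type := ∀ n : ℕ, HSd d (n + 1) →ₗ[K] Kz

/-- The Markov trace conditions. -/
def IsMarkov (d : ℕ) (T : TRc d) : Prop :=
  (∀ (n k l : ℕ) (α β : SB (n + 1)), α ∈ SdB k (n + 1) → β ∈ SdB l (n + 1) → k + l = d →
    ∀ (h₁ : ιH (α * β) ∈ HSd d (n + 1)) (h₂ : ιH (β * α) ∈ HSd d (n + 1)),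
      T n ⟨ιH (α * β), h₁⟩ = T n ⟨ιH (β * α), h₂⟩) ∧
  (∀ (n : ℕ) (β : SB (n + 1)), β ∈ SdB d (n + 1) →
    ∀ (h₁ : ιH (incl β) ∈ HSd d (n + 2)) (h₂ : ιH β ∈ HSd d (n + 1)),
      T (n + 1) ⟨ιH (incl β), h₁⟩ = T n ⟨ιH β, h₂⟩) ∧
  (∀ (n : ℕ) (β : SB (n + 1)), β ∈ SdB d (n + 1) →
    ∀ (h₁ : ιH (incl β * sσ (lastGen n)) ∈ HSd d (n + 2)) (h₂ : ιH β ∈ HSd d (n + 1)),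
      T (n + 1) ⟨ιH (incl β * sσ (lastGen n)), h₁⟩ = z * T n ⟨ιH β, h₂⟩)

/-- `TR_d` : the 𝕂(z)-vector space of Markov traces on `{H(S_d B_n)}ₙ`. -/
def TR (d : ℕ) : Submodule Kz (TRc d) where
  carrier := {T | IsMarkov d T}
  add_mem' := by
    rintro a b ⟨ha1, ha2, ha3⟩ ⟨hb1, hb2, hb3⟩
    refine ⟨?_, ?_, ?_⟩
    · intro n k l α β hα hβ hkl h₁ h₂
      simp only [Pi.add_apply, LinearMap.add_apply,
        ha1 n k l α β hα hβ hkl h₁ h₂, hb1 n k l α β hα hβ hkl h₁ h₂]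
    · intro n β hβ h₁ h₂
      simp only [Pi.add_apply, LinearMap.add_apply, ha2 n β hβ h₁ h₂, hb2 n β hβ h₁ h₂]
    · intro n β hβ h₁ h₂
      simp only [Pi.add_apply, LinearMap.add_apply, ha3 n β hβ h₁ h₂, hb3 n β hβ h₁ h₂]
      ring
  zero_mem' := by
    refine ⟨?_, ?_, ?_⟩ <;> intros <;> simp
  smul_mem' := by
    rintro c a ⟨ha1, ha2, ha3⟩
    refine ⟨?_, ?_, ?_⟩
    · intro n k l α β hα hβ hkl h₁ h₂
      simp only [Pi.smul_apply, LinearMap.smul_apply, ha1 n k l α β hα hβ hkl h₁ h₂]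
    · intro n β hβ h₁ h₂
      simp only [Pi.smul_apply, LinearMap.smul_apply, ha2 n β hβ h₁ h₂]
    · intro n β hβ h₁ h₂
      simp only [Pi.smul_apply, LinearMap.smul_apply, ha3 n β hβ h₁ h₂, smul_eq_mul]
      ring

lemma ndeg_list_prod {n : ℕ} (l : List (SB n)) : ndeg l.prod = (l.map ndeg).sum := by
  induction l with
  | nil => simpa using ndeg_one
  | cons a l ih => simp [ndeg_mul, ih]

lemma mem_expr {m d : ℕ} (α : Fin (d + 1) → SB m) (hα : ∀ j, α j ∈ SdB 0 m)
    (idx : Fin d → Fin (m - 1)) :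
    (α 0 * (List.ofFn fun j : Fin d => sτ (idx j) * α j.succ).prod) ∈ SdB d m := by
  refine mem_SdB ?_
  rw [ndeg_mul, ndeg_list_prod, List.map_ofFn, hα 0]
  have h : (fun j : Fin d => ndeg (sτ (idx j) * α j.succ)) = fun _ => 1 := by
    funext j; rw [ndeg_mul, ndeg_sτ, hα j.succ]
  rw [show ndeg ∘ (fun j : Fin d => sτ (idx j) * α j.succ)
      = fun j : Fin d => ndeg (sτ (idx j) * α j.succ) from rfl, h]
  simp

lemma mem_exprS {m d : ℕ} (α : Fin (d + 1) → SB m) (hα : ∀ j, α j ∈ SdB 0 m)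
    (idx : Fin d → Fin (m - 1)) (S : Finset (Fin d)) :
    (α 0 * (List.ofFn fun j : Fin d =>
      (if j ∈ S then sσ (idx j) else 1) * α j.succ).prod) ∈ SdB 0 m := by
  refine mem_SdB ?_
  rw [ndeg_mul, ndeg_list_prod, List.map_ofFn, hα 0]
  have h : (fun j : Fin d => ndeg ((if j ∈ S then sσ (idx j) else 1) * α j.succ))
      = fun _ => 0 := by
    funext j
    rw [ndeg_mul, hα j.succ]
    split <;> simp [ndeg_sσ, ndeg_one]
  rw [show ndeg ∘ (fun j : Fin d => (if j ∈ S then sσ (idx j) else 1) * α j.succ)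
      = fun j : Fin d => ndeg ((if j ∈ S then sσ (idx j) else 1) * α j.succ) from rfl, h]
  simp

lemma mem_tau_pow {n : ℕ} (i : Fin (n - 1)) (d : ℕ) : (sτ i) ^ d ∈ SdB d n := by
  refine mem_SdB ?_; simp [ndeg_pow, ndeg_sτ]

lemma mem_tau_pow_sigma {n : ℕ} (i i' : Fin (n - 1)) (d : ℕ) :
    (sτ i) ^ d * sσ i' ∈ SdB d n := by
  refine mem_SdB ?_; simp [ndeg_mul, ndeg_pow, ndeg_sτ, ndeg_sσ]

lemma mem_tau_tau {n : ℕ} (i i' : Fin (n - 1)) (a b : ℕ) :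
    (sτ i) ^ a * (sτ i') ^ b ∈ SdB (a + b) n := by
  refine mem_SdB ?_; simp [ndeg_mul, ndeg_pow, ndeg_sτ]

lemma mem_tau_tau_sigma {n : ℕ} (i i' i'' : Fin (n - 1)) (a b : ℕ) :
    (sτ i) ^ a * (sτ i') ^ b * sσ i'' ∈ SdB (a + b) n := by
  refine mem_SdB ?_; simp [ndeg_mul, ndeg_pow, ndeg_sτ, ndeg_sσ]

/-- `σ_{i+1}` with out-of-range indices interpreted as `1`. -/
def sσ' (n : ℕ) (i : ℕ) : SB n := if h : i < n - 1 then sσ ⟨i, h⟩ else 1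

/-- `descChain n m = σ_{n-1} σ_{n-2} ⋯ σ_{n-m}` (1-indexed), `m` letters. -/
def descChain (n : ℕ) : ℕ → SB n
  | 0 => 1
  | m + 1 => descChain n m * sσ' n (n - 2 - m)

/-- The sets `ℬ_n` describing the standard basis of the Hecke algebra `H(B_n)`:
`ℬ_1 = {1}` and `ℬ_n = {β u : β ∈ ℬ_{n-1}, u ∈ U_n}` where
`U_n = {1, σ_{n-1}, σ_{n-1}σ_{n-2}, …, σ_{n-1}⋯σ_1}`. -/
def Bset : (n : ℕ) → Set (SB n)
  | 0 => {1}
  | n + 1 => {x | ∃ β ∈ Bset n, ∃ m ≤ n, x = incl β * descChain (n + 1) m}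

/-- The set `𝒞_{d,n}` of singular braids of the form `τ_{i_1} ⋯ τ_{i_d} β` with `β ∈ ℬ_n`. -/
def Cdn (d n : ℕ) : Set (SB n) :=
  {x | ∃ idx : Fin d → Fin (n - 1), ∃ β ∈ Bset n,
    x = (List.ofFn fun j : Fin d => sτ (idx j)).prod * β}


section Aux

lemma sb_rel {n : ℕ} {x y : FreeMonoid (SBGen n)} (h : SBRel n x y) :
    (SBcon n).mk' x = (SBcon n).mk' y :=
  (Con.eq _).mpr (ConGen.Rel.of _ _ h)

lemma ιH_mul {n : ℕ} (a b : SB n) : ιH (a * b) = ιH a * ιH b := by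
  unfold ιH
  rw [map_mul (MonoidAlgebra.of K (SB n))]
  exact map_mul (RingQuot.mkAlgHom K (hrel n)) _ _

lemma sσ_comm {n : ℕ} {i j : Fin (n-1)} (h : far i j) : sσ i * sσ j = sσ j * sσ i := by
  have h1 := sb_rel (SBRel.ss_comm i j h)
  simp only [map_mul] at h1
  exact h1

lemma sσ_braid {n : ℕ} {i j : Fin (n-1)} (h : adj i j) :
    sσ i * sσ j * sσ i = sσ j * sσ i * sσ j := by
  have h1 := sb_rel (SBRel.braid i j h)
  simp only [map_mul] at h1
  exact h1

lemma σH_sq {n : ℕ} (i : Fin (n-1)) :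
    σH i * σH i = (q - 1) • σH i + q • (1 : H n) := by
  have h : RingQuot.mkAlgHom K (hrel n) ((MonoidAlgebra.of K (SB n) (sσ i)) ^ 2)
      = RingQuot.mkAlgHom K (hrel n)
        ((q - 1) • MonoidAlgebra.of K (SB n) (sσ i) + q • 1) :=
    RingQuot.mkAlgHom_rel K ⟨i, rfl, rfl⟩
  rw [map_add, map_smul, map_smul, map_one, map_pow, pow_two] at h
  exact h

lemma σH_comm {n : ℕ} {i j : Fin (n-1)} (h : far i j) : σH i * σH j = σH j * σH i := by
  show ιH (sσ i) * ιH (sσ j) = ιH (sσ j) * ιH (sσ i)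
  rw [← ιH_mul, ← ιH_mul, sσ_comm h]

lemma σH_braid {n : ℕ} {i j : Fin (n-1)} (h : adj i j) :
    σH i * (σH j * σH i) = σH j * (σH i * σH j) := by
  show ιH (sσ i) * (ιH (sσ j) * ιH (sσ i)) = ιH (sσ j) * (ιH (sσ i) * ιH (sσ j))
  rw [← ιH_mul, ← ιH_mul, ← ιH_mul, ← ιH_mul, ← mul_assoc, sσ_braid h, mul_assoc]

end Aux


lemma main_calc {R : Type} [Ring R] [Algebra K R] (s1 s2 s3 ω₀ : R)
    (hω : ω₀ = s1 * s2 + s3 * s2 + s1 * s3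
      - algebraMap K R (q - 1) * s1 - algebraMap K R (q - 1) * s2
      - algebraMap K R (q - 1) * s3 + algebraMap K R (q ^ 2 - q + 1))
    (sq1 : s1 * s1 = (q - 1) • s1 + q • (1 : R))
    (sq3 : s3 * s3 = (q - 1) • s3 + q • (1 : R))
    (c31 : s3 * s1 = s1 * s3)
    (br : s2 * (s3 * s2) = s3 * (s2 * s3)) :
    algebraMap K R 2 * (s1 * s3) - algebraMap K R (q - 1) * s1
        - algebraMap K R (q - 1) * s3 + algebraMap K R (q ^ 2 + 1)
      = algebraMap K R (q ^ 2)⁻¹ *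
        ((algebraMap K R q * (s1 * ω₀) + algebraMap K R q * (ω₀ * s3)
            + algebraMap K R (q - 1) * (s1 * ω₀ * s3)
            - s1 * ω₀ * s3 * s2) * (s1 - algebraMap K R (q - 1))) := by
  simp only [Algebra.algebraMap_eq_smul_one, smul_mul_assoc, one_mul] at hω ⊢
  obtain ⟨A, hA⟩ : ∃ A : R, A = s1 + s3 - (q - 1) • (1 : R) := ⟨_, rfl⟩
  obtain ⟨D, hD⟩ : ∃ D : R, D = s1 * s3 + q • (1 : R) := ⟨_, rfl⟩
  obtain ⟨C, hC⟩ : ∃ C : R, C = s2 + s3 - (q - 1) • (1 : R) := ⟨_, rfl⟩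
  have f1 : s1 * A = D := by
    rw [hA, hD, mul_sub, mul_add, sq1, mul_smul_comm, mul_one]
    abel
  have f2 : A * s1 = D := by
    rw [hA, hD, sub_mul, add_mul, sq1, c31, smul_mul_assoc, one_mul]
    abel
  have f3 : C * s3 = s2 * s3 + q • (1 : R) := by
    rw [hC, sub_mul, add_mul, sq3, smul_mul_assoc, one_mul]
    abel
  have f4 : D * s3 = (q - 1) • D + q • A := by
    rw [hD, hA, add_mul, smul_mul_assoc, one_mul, mul_assoc, sq3, mul_add,
      mul_smul_comm, mul_smul_comm, mul_one]
    simp only [smul_add, smul_sub, smul_smul]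
    ring_nf
    abel
  have f5 : D * s1 = (q - 1) • D + q • A := by
    rw [hD, hA, add_mul, smul_mul_assoc, one_mul, mul_assoc, c31, ← mul_assoc, sq1,
      add_mul, smul_mul_assoc, smul_mul_assoc, one_mul]
    simp only [smul_add, smul_sub, smul_smul]
    ring_nf
    abel
  have f0 : ω₀ = A * C := by
    rw [hω, hA, hC, show (q ^ 2 - q + 1 : K) = q + (q - 1) * (q - 1) by ring, add_smul]
    simp only [sub_mul, add_mul, mul_sub, mul_add, smul_mul_assoc, mul_smul_comm,
      mul_one, one_mul, sq3, smul_add, smul_sub, smul_smul]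
    ring_nf
    abel
  have e1 : s1 * ω₀ = D * C := by rw [f0, ← mul_assoc, f1]
  have e2 : ω₀ * s3 = A * (s2 * s3) + q • A := by
    rw [f0, mul_assoc, f3, mul_add, mul_smul_comm, mul_one]
  have e3 : s1 * ω₀ * s3 = D * (s2 * s3) + q • D := by
    rw [e1, mul_assoc, f3, mul_add, mul_smul_comm, mul_one]
  have e4a : D * (s2 * s3) * s2 = D * s3 * (s2 * s3) := by
    rw [mul_assoc D (s2 * s3) s2, mul_assoc s2 s3 s2, br, ← mul_assoc]
  have e4 : s1 * ω₀ * s3 * s2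
      = (q - 1) • (D * (s2 * s3)) + q • (A * (s2 * s3)) + q • (D * s2) := by
    rw [e3, add_mul, smul_mul_assoc, e4a, f4, add_mul, smul_mul_assoc, smul_mul_assoc]
  have fDC : D * C = D * s2 + D * s3 - (q - 1) • D := by
    rw [hC, mul_sub, mul_add, mul_smul_comm, mul_one]
  have hE : q • (D * C) + q • (A * (s2 * s3) + q • A)
      + (q - 1) • (D * (s2 * s3) + q • D)
      - ((q - 1) • (D * (s2 * s3)) + q • (A * (s2 * s3)) + q • (D * s2))
      = q • (D * s3) + (q * q) • A := by
    rw [fDC]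
    simp only [smul_add, smul_sub, smul_smul]
    ring_nf
    abel
  have f6 : D * s3 * s1 = ((q - 1) * (q - 1)) • D + q • D + ((q - 1) * q) • A := by
    rw [f4, add_mul, smul_mul_assoc, smul_mul_assoc, f5, f2]
    simp only [smul_add, smul_sub, smul_smul]
    abel
  have h7 : (q • (D * s3) + (q * q) • A) * (s1 - (q - 1) • (1 : R))
      = (q * q) • D + (q * q) • D - ((q * q) * (q - 1)) • A := by
    rw [add_mul, mul_sub, mul_sub, smul_mul_assoc, smul_mul_assoc, smul_mul_assoc,
      smul_mul_assoc, f6, f2, mul_smul_comm, mul_smul_comm, mul_one, mul_one, f4]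
    simp only [smul_add, smul_sub, smul_smul]
    ring_nf
    abel
  rw [e4, e3, e2, e1, hE, h7]
  have hq2 : ((q : K) ^ 2)⁻¹ * (q * q) = 1 := by
    rw [show (q : K) * q = q ^ 2 by ring]
    exact inv_mul_cancel₀ (pow_ne_zero _ RatFunc.X_ne_zero)
  rw [smul_sub, smul_add, smul_smul, smul_smul, hq2, one_smul,
    show ((q : K) ^ 2)⁻¹ * (q * q * (q - 1)) = (q - 1) * (((q : K) ^ 2)⁻¹ * (q * q)) by ring,
    hq2, mul_one]
  rw [hD, hA, show (q ^ 2 + 1 : K) = q + q + (q - 1) * (q - 1) by ring, add_smul, add_smul,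
    two_smul K]
  simp only [smul_add, smul_sub, smul_smul]
  ring_nf
  abel

/-- For `n ≥ 4`, in `H(SB_n)`, with
`ω₀ = σ₁σ₂ + σ₃σ₂ + σ₁σ₃ − (q−1)σ₁ − (q−1)σ₂ − (q−1)σ₃ + (q²−q+1)` and
`C₁₃ = 2σ₁σ₃ − (q−1)σ₁ − (q−1)σ₃ + q² + 1`:
`C₁₃ = q⁻² (qσ₁ω₀ + qω₀σ₃ + (q−1)σ₁ω₀σ₃ − σ₁ω₀σ₃σ₂)(σ₁ − (q−1))`. -/
theorem statement15 (n : ℕ) (hn : 4 ≤ n) :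
    letI s1 : H n := σH ⟨0, by omega⟩
    letI s2 : H n := σH ⟨1, by omega⟩
    letI s3 : H n := σH ⟨2, by omega⟩
    letI ω₀ : H n := s1 * s2 + s3 * s2 + s1 * s3
      - cK (q - 1) * s1 - cK (q - 1) * s2 - cK (q - 1) * s3 + cK (q ^ 2 - q + 1)
    cK 2 * (s1 * s3) - cK (q - 1) * s1 - cK (q - 1) * s3 + cK (q ^ 2 + 1)
      = cK (q ^ 2)⁻¹ *
        ((cK q * (s1 * ω₀) + cK q * (ω₀ * s3) + cK (q - 1) * (s1 * ω₀ * s3)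
            - s1 * ω₀ * s3 * s2) * (s1 - cK (q - 1))) := by
  exact main_calc _ _ _ _ rfl (σH_sq _) (σH_sq _)
    (σH_comm (n := n) (i := ⟨2, by omega⟩) (j := ⟨0, by omega⟩) (Or.inr (by simp)))
    (σH_braid (n := n) (i := ⟨1, by omega⟩) (j := ⟨2, by omega⟩) (Or.inl rfl))
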